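/- For all real numbers x ≥ 0 and y ≥ 0, we have exp(2x·tanh(y)) ≥ (exp(x+y) + exp(-x-y)) / (exp(x-y) + exp(-x+y)). -/

import Mathlib

open Real

private lemma frac_eq (u : ℝ) :
    (Real.exp u - Real.exp (-u)) / (Real.exp u + Real.exp (-u))
      = (Real.exp (2 * u) - 1) / (Real.exp (2 * u) + 1) := by
  have h : Real.exp (2 * u) = Real.exp u * Real.exp u := by
    rw [← Real.exp_add]; ring_nf
  have hinv : Real.exp (-u) = (Real.exp u)⁻¹ := Real.exp_neg u
  have hpos : (0:ℝ) < Real.exp u := Real.exp_pos u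
  rw [h, hinv, div_eq_div_iff (by positivity) (by positivity)]
  field_simp

private lemma tanh_eq' (y : ℝ) :
    Real.tanh y = (Real.exp (2 * y) - 1) / (Real.exp (2 * y) + 1) := by
  rw [Real.tanh_eq_sinh_div_cosh, Real.sinh_eq, Real.cosh_eq, ← frac_eq]
  have hp : rexp y + rexp (-y) ≠ 0 := by positivity
  field_simp

private lemma key_poly (c b : ℝ) (hc : 0 < c) (hb : 1 ≤ b) :
    0 ≤ 2 * ((b - 1) / (b + 1)) + (c - 1) / (c + 1) - (c * b * b - 1) / (c * b * b + 1) := by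
  have hb0 : (0:ℝ) < b := by linarith
  have h1 : (0:ℝ) < b + 1 := by linarith
  have h2 : (0:ℝ) < c + 1 := by linarith
  have h3 : (0:ℝ) < c * b * b + 1 := by positivity
  have heq : 2 * ((b - 1) / (b + 1)) + (c - 1) / (c + 1) - (c * b * b - 1) / (c * b * b + 1)
      = (2 * (b - 1) * (c * b - 1) ^ 2) / ((b + 1) * (c + 1) * (c * b * b + 1)) := by
    field_simp
    ring
  rw [heq]
  have : (0:ℝ) ≤ b - 1 := by linarith
  positivity

private lemma g_deriv (y : ℝ) (x : ℝ) :
    HasDerivAt (fun x => 2 * x * Real.tanh y + Real.log (Real.exp (x - y) + Real.exp (-x + y))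
        - Real.log (Real.exp (x + y) + Real.exp (-x - y)))
      (2 * Real.tanh y
        + (Real.exp (x - y) - Real.exp (-x + y)) / (Real.exp (x - y) + Real.exp (-x + y))
        - (Real.exp (x + y) - Real.exp (-x - y)) / (Real.exp (x + y) + Real.exp (-x - y))) x := by
  have h1 : HasDerivAt (fun x : ℝ => 2 * x * Real.tanh y) (2 * Real.tanh y) x := by
    simpa using ((hasDerivAt_id x).const_mul 2).mul_const (Real.tanh y)
  have h2 : HasDerivAt (fun x : ℝ => Real.exp (x - y) + Real.exp (-x + y))
      (Real.exp (x - y) - Real.exp (-x + y)) x := by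
    have a1 := ((hasDerivAt_id x).sub_const y).exp
    have a2 := (((hasDerivAt_id x).neg).add_const y).exp
    simpa [mul_comm, sub_eq_add_neg] using a1.fun_add a2
  have h3 : HasDerivAt (fun x : ℝ => Real.exp (x + y) + Real.exp (-x - y))
      (Real.exp (x + y) - Real.exp (-x - y)) x := by
    have a1 := ((hasDerivAt_id x).add_const y).exp
    have a2 := (((hasDerivAt_id x).neg).sub_const y).exp
    simpa [mul_comm, sub_eq_add_neg] using a1.fun_add a2
  have p2 : (0:ℝ) < Real.exp (x - y) + Real.exp (-x + y) := by positivity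
  have p3 : (0:ℝ) < Real.exp (x + y) + Real.exp (-x - y) := by positivity
  have := (h1.fun_add (h2.log (ne_of_gt p2))).fun_sub (h3.log (ne_of_gt p3))
  convert this using 1

theorem stmt_0 (x y : ℝ) (hx : 0 ≤ x) (hy : 0 ≤ y) :
    Real.exp (2 * x * Real.tanh y) ≥
      (Real.exp (x + y) + Real.exp (-x - y)) / (Real.exp (x - y) + Real.exp (-x + y)) := by
  set g : ℝ → ℝ := fun x => 2 * x * Real.tanh y
      + Real.log (Real.exp (x - y) + Real.exp (-x + y))
      - Real.log (Real.exp (x + y) + Real.exp (-x - y)) with hg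
  have hmono : MonotoneOn g (Set.Ici (0:ℝ)) := by
    apply monotoneOn_of_deriv_nonneg (convex_Ici 0)
    · apply Continuous.continuousOn
      apply Continuous.sub
      apply Continuous.add
      · fun_prop
      · apply Continuous.log (by fun_prop)
        intro t
        positivity
      · apply Continuous.log (by fun_prop)
        intro t
        positivity
    · intro t _
      exact (g_deriv y t).differentiableAt.differentiableWithinAt
    · intro t ht
      rw [(g_deriv y t).deriv]
      have e1 : (Real.exp (t - y) - Real.exp (-t + y)) / (Real.exp (t - y) + Real.exp (-t + y))
          = (Real.exp (2 * (t - y)) - 1) / (Real.exp (2 * (t - y)) + 1) := by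
        have := frac_eq (t - y)
        rwa [show -(t - y) = -t + y by ring] at this
      have e2 : (Real.exp (t + y) - Real.exp (-t - y)) / (Real.exp (t + y) + Real.exp (-t - y))
          = (Real.exp (2 * (t + y)) - 1) / (Real.exp (2 * (t + y)) + 1) := by
        have := frac_eq (t + y)
        rwa [show -(t + y) = -t - y by ring] at this
      have e3 : Real.exp (2 * (t + y)) = Real.exp (2 * (t - y)) * Real.exp (2 * y) * Real.exp (2 * y) := by
        rw [← Real.exp_add, ← Real.exp_add]; ring_nf
      rw [e1, e2, e3, tanh_eq']
      exact key_poly _ _ (Real.exp_pos _) (Real.one_le_exp (by linarith))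
  have h0 : g 0 = 0 := by
    simp only [hg]
    norm_num
    rw [add_comm]
    ring_nf
  have hgx : 0 ≤ g x := by
    have := hmono Set.self_mem_Ici (Set.mem_Ici.mpr hx) hx
    rwa [h0] at this
  have p2 : (0:ℝ) < Real.exp (x - y) + Real.exp (-x + y) := by positivity
  have p3 : (0:ℝ) < Real.exp (x + y) + Real.exp (-x - y) := by positivity
  rw [ge_iff_le, div_le_iff₀ p2, ← Real.exp_log p2, ← Real.exp_log p3, ← Real.exp_add,
    Real.exp_le_exp]
  have hgx' : 0 ≤ 2 * x * Real.tanh y + Real.log (Real.exp (x - y) + Real.exp (-x + y))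
      - Real.log (Real.exp (x + y) + Real.exp (-x - y)) := hgx
  linarith
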